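/- Let F be a finite family of sets such that for every nonempty subfamily F' of F there exists a set F' ∈ F' whose closed neighbourhood in F' (the sets of F' intersecting it, including itself) can be hit by at most t points. Then the minimum hitting set of F has size at most t times the maximum packing (pairwise disjoint subfamily) of F, i.e., τ(F) ≤ t·ν(F). -/

import Mathlib

open Classical MeasureTheory
noncomputable section

/-- Points of the Euclidean plane. -/
abbrev Pt := EuclideanSpace ℝ (Fin 2)

/-- A finite point set `H` hits every member of the family `F`. -/
def Hits (H : Finset Pt) (F : Finset (Set Pt)) : Prop := ∀ S ∈ F, ∃ p ∈ H, p ∈ S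

/-- The hitting number τ of a family. -/
def hitNum (F : Finset (Set Pt)) : ℕ := sInf {n | ∃ H : Finset Pt, H.card = n ∧ Hits H F}

/-- The packing number ν of a family. -/
def packNum (F : Finset (Set Pt)) : ℕ :=
  sSup {n | ∃ P ⊆ F, P.card = n ∧ (P : Set (Set Pt)).Pairwise Disjoint}

/-- The maximum degree Δ of a family: the maximum number of members containing a common point. -/
def maxDeg (F : Finset (Set Pt)) : ℕ :=
  sSup {n | ∃ p : Pt, (F.filter fun S => p ∈ S).card = n}

/-- The chromatic number χ of the intersection graph of a family. -/
def chromNum (F : Finset (Set Pt)) : ℕ :=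
  sInf {n | ∃ col : Set Pt → ℕ, (∀ S ∈ F, col S < n) ∧
    ∀ S ∈ F, ∀ T ∈ F, S ≠ T → (S ∩ T).Nonempty → col S ≠ col T}

/-- Hitting-`t`-degeneracy: every nonempty subfamily has a member whose closed
neighbourhood within the subfamily can be hit by at most `t` points. -/
def HitDeg (t : ℕ) (F : Finset (Set Pt)) : Prop :=
  ∀ F' ⊆ F, F'.Nonempty → ∃ S ∈ F',
    hitNum (F'.filter fun T => (T ∩ S).Nonempty) ≤ t

/-- `D`-degeneracy of a family: every nonempty subfamily has a member intersecting
at most `D` other members of the subfamily. -/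
def FamDeg (D : ℕ) (F : Finset (Set Pt)) : Prop :=
  ∀ F' ⊆ F, F'.Nonempty → ∃ S ∈ F',
    (F'.filter fun T => T ≠ S ∧ (T ∩ S).Nonempty).card ≤ D

lemma hits_exists (F : Finset (Set Pt)) (hF : ∀ S ∈ F, S.Nonempty) :
    ∃ H : Finset Pt, Hits H F := by
  refine ⟨F.image fun S => if h : S.Nonempty then h.choose else 0, ?_⟩
  intro S hS
  exact ⟨_, Finset.mem_image_of_mem _ hS, by
    simp only [dif_pos (hF S hS)]; exact (hF S hS).choose_spec⟩

lemma hitNum_le_card {H : Finset Pt} {F : Finset (Set Pt)} (hH : Hits H F) :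
    hitNum F ≤ H.card := Nat.sInf_le ⟨H, rfl, hH⟩

lemma exists_hits_card (F : Finset (Set Pt)) (hF : ∀ S ∈ F, S.Nonempty) :
    ∃ H : Finset Pt, H.card = hitNum F ∧ Hits H F := by
  obtain ⟨H, hH⟩ := hits_exists F hF
  have hne2 : {m | ∃ H : Finset Pt, H.card = m ∧ Hits H F}.Nonempty := ⟨H.card, H, rfl, hH⟩
  exact Nat.sInf_mem hne2

lemma packNum_bdd (F : Finset (Set Pt)) :
    BddAbove {n | ∃ P ⊆ F, P.card = n ∧ (P : Set (Set Pt)).Pairwise Disjoint} := by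
  refine ⟨F.card, ?_⟩
  rintro n ⟨P, hPF, rfl, -⟩
  exact Finset.card_le_card hPF

lemma le_packNum {F : Finset (Set Pt)} {P : Finset (Set Pt)} (hPF : P ⊆ F)
    (hP : (P : Set (Set Pt)).Pairwise Disjoint) : P.card ≤ packNum F :=
  le_csSup (packNum_bdd F) ⟨P, hPF, rfl, hP⟩

lemma exists_packing (F : Finset (Set Pt)) :
    ∃ P ⊆ F, P.card = packNum F ∧ (P : Set (Set Pt)).Pairwise Disjoint := by
  have h0 : (0 : ℕ) ∈ {n | ∃ P ⊆ F, P.card = n ∧ (P : Set (Set Pt)).Pairwise Disjoint} :=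
    ⟨∅, Finset.empty_subset _, rfl, by simp⟩
  exact Nat.sSup_mem ⟨0, h0⟩ (packNum_bdd F)

lemma stmt_0_aux (t : ℕ) : ∀ n (F : Finset (Set Pt)), F.card ≤ n → HitDeg t F →
    hitNum F ≤ t * packNum F := by
  intro n
  induction n with
  | zero =>
    intro F hc _
    have : F = ∅ := Finset.card_eq_zero.mp (Nat.le_zero.mp hc)
    subst this
    have : hitNum ∅ ≤ (∅ : Finset Pt).card :=
      hitNum_le_card (by intro S hS; simp at hS)
    exact this.trans (by simp)
  | succ n ih =>
    intro F hc hdeg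
    by_cases hne : F.Nonempty
    · by_cases hall : ∀ S ∈ F, S.Nonempty
      · -- all members nonempty
        obtain ⟨S, hSF, hSt⟩ := hdeg F (le_refl _) hne
        set N := F.filter fun T => (T ∩ S).Nonempty with hN
        set F₂ := F.filter fun T => ¬(T ∩ S).Nonempty with hF₂
        have hSne : S.Nonempty := hall S hSF
        have hSN : S ∈ N := Finset.mem_filter.mpr ⟨hSF, by simpa using hSne⟩
        have hSF₂ : S ∉ F₂ := by
          intro hS2
          exact (Finset.mem_filter.mp hS2).2 (by simpa using hSne)
        -- extract hitting set for N of size ≤ t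
        obtain ⟨H₁, hH₁card, hH₁⟩ := exists_hits_card N
          (fun T hT => hall T (Finset.mem_filter.mp hT).1)
        have hH₁t : H₁.card ≤ t := hH₁card ▸ hSt
        -- F₂ is smaller
        have hF₂sub : F₂ ⊆ F := Finset.filter_subset _ _
        have hlt : F₂.card < F.card :=
          Finset.card_lt_card ⟨hF₂sub, fun hsub => hSF₂ (hsub hSF)⟩
        have hF₂deg : HitDeg t F₂ := fun F' hF' hF'ne =>
          hdeg F' (hF'.trans hF₂sub) hF'ne
        have hih : hitNum F₂ ≤ t * packNum F₂ :=
          ih F₂ (by omega) hF₂deg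
        obtain ⟨H₂, hH₂card, hH₂⟩ := exists_hits_card F₂
          (fun T hT => hall T (hF₂sub hT))
        -- H₁ ∪ H₂ hits F
        have hhits : Hits (H₁ ∪ H₂) F := by
          intro T hT
          by_cases hTS : (T ∩ S).Nonempty
          · obtain ⟨p, hp, hpT⟩ := hH₁ T (Finset.mem_filter.mpr ⟨hT, hTS⟩)
            exact ⟨p, Finset.mem_union_left _ hp, hpT⟩
          · obtain ⟨p, hp, hpT⟩ := hH₂ T (Finset.mem_filter.mpr ⟨hT, hTS⟩)
            exact ⟨p, Finset.mem_union_right _ hp, hpT⟩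
        -- packing of F₂ extends by S
        obtain ⟨P, hPF₂, hPcard, hPdisj⟩ := exists_packing F₂
        have hSP : S ∉ P := fun hSP => hSF₂ (hPF₂ hSP)
        have hins : insert S P ⊆ F := by
          intro T hT
          rcases Finset.mem_insert.mp hT with rfl | hT
          · exact hSF
          · exact hF₂sub (hPF₂ hT)
        have hinsdisj : ((insert S P : Finset (Set Pt)) : Set (Set Pt)).Pairwise Disjoint := by
          rw [Finset.coe_insert]
          refine Set.pairwise_insert_of_symmetric |>.mpr ⟨hPdisj, ?_⟩
          intro T hTP _
          have hT2 := Finset.mem_filter.mp (hPF₂ hTP)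
          rw [Set.not_nonempty_iff_eq_empty] at hT2
          exact (Set.disjoint_iff_inter_eq_empty.mpr hT2.2).symm
        have hpack : packNum F₂ + 1 ≤ packNum F := by
          have := le_packNum hins hinsdisj
          rwa [Finset.card_insert_of_notMem hSP, hPcard] at this
        calc hitNum F ≤ (H₁ ∪ H₂).card := hitNum_le_card hhits
          _ ≤ H₁.card + H₂.card := Finset.card_union_le _ _
          _ ≤ t + t * packNum F₂ := by rw [hH₂card]; omega
          _ = t * (packNum F₂ + 1) := by ring
          _ ≤ t * packNum F := Nat.mul_le_mul_left t hpack
      · -- some member is empty: no hitting set exists, hitNum = 0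
        push_neg at hall
        obtain ⟨S, hSF, hSe⟩ := hall
        have : {n | ∃ H : Finset Pt, H.card = n ∧ Hits H F} = ∅ := by
          ext m
          simp only [Set.mem_setOf_eq, Set.mem_empty_iff_false, iff_false]
          rintro ⟨H, -, hH⟩
          obtain ⟨p, -, hp⟩ := hH S hSF
          rw [hSe] at hp
          exact hp
        rw [hitNum, this, Nat.sInf_empty]
        exact Nat.zero_le _
    · rw [Finset.not_nonempty_iff_eq_empty] at hne
      subst hne
      have : hitNum ∅ ≤ (∅ : Finset Pt).card :=
        hitNum_le_card (by intro S hS; simp at hS)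
      exact this.trans (by simp)

theorem stmt_0 (t : ℕ) (F : Finset (Set Pt)) (h : HitDeg t F) :
    hitNum F ≤ t * packNum F :=
  stmt_0_aux t F.card F le_rfl h
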